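/- Intersection of an integrally convex set with an integer box: if S ⊆ ℤⁿ is an integrally convex set and D = {x ∈ ℤⁿ : α ≤ x ≤ β} for α ∈ (ℤ ∪ {-∞})ⁿ, β ∈ (ℤ ∪ {+∞})ⁿ with α ≤ β, then the convex hull of S ∩ D equals the intersection of the convex hull of S with the convex hull of D. -/

import Mathlib

open scoped BigOperators

/-- The integral neighborhood N(u) = {z ∈ ℤⁿ : |uᵢ − zᵢ| < 1 for all i}. -/
def intNbhd {n : ℕ} (u : Fin n → ℝ) : Set (Fin n → ℤ) :=
  {z | ∀ i, |u i - (z i : ℝ)| < 1}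

/-- Coercion of an integer point to a real point. -/
def castR {n : ℕ} (z : Fin n → ℤ) : Fin n → ℝ := fun i => (z i : ℝ)

/-- A nonempty S ⊆ ℤⁿ is *integrally convex* if every real point of its
convex hull lies in the convex hull of S ∩ N(u). -/
def IntegrallyConvexSet {n : ℕ} (S : Set (Fin n → ℤ)) : Prop :=
  S.Nonempty ∧ ∀ u : Fin n → ℝ, u ∈ convexHull ℝ (castR '' S) →
    u ∈ convexHull ℝ (castR '' (S ∩ intNbhd u))

/-- The real box is convex. -/
lemma real_box_convex {n : ℕ} (α β : Fin n → EReal) :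
    Convex ℝ {u : Fin n → ℝ | ∀ i, α i ≤ ((u i : ℝ) : EReal) ∧ ((u i : ℝ) : EReal) ≤ β i} := by
  have : {u : Fin n → ℝ | ∀ i, α i ≤ ((u i : ℝ) : EReal) ∧ ((u i : ℝ) : EReal) ≤ β i} =
      ⋂ i, ({u : Fin n → ℝ | α i ≤ ((u i : ℝ) : EReal)} ∩
            {u : Fin n → ℝ | ((u i : ℝ) : EReal) ≤ β i}) := by
    ext u; simp [Set.mem_iInter, forall_and]
  rw [this]
  refine convex_iInter fun i => Convex.inter ?_ ?_
  · rcases eq_bot_or_bot_lt (α i) with h | h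
    · have he : {u : Fin n → ℝ | α i ≤ ((u i : ℝ) : EReal)} = Set.univ := by
        ext u; simp [h]
      rw [he]; exact convex_univ
    · by_cases htop : α i = ⊤
      · have he : {u : Fin n → ℝ | α i ≤ ((u i : ℝ) : EReal)} = ∅ := by
          ext u
          simp only [Set.mem_setOf_eq, Set.mem_empty_iff_false, iff_false, not_le, htop]
          exact EReal.coe_lt_top _
        rw [he]; exact convex_empty
      · lift α i to ℝ using ⟨htop, h.ne'⟩ with a ha
        have : {u : Fin n → ℝ | (a : EReal) ≤ ((u i : ℝ) : EReal)} =
            {u : Fin n → ℝ | a ≤ u i} := by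
          ext u; simp [EReal.coe_le_coe_iff]
        rw [this]
        exact convex_halfSpace_ge ⟨fun x y => rfl, fun c x => rfl⟩ a
  · rcases eq_top_or_lt_top (β i) with h | h
    · have he : {u : Fin n → ℝ | ((u i : ℝ) : EReal) ≤ β i} = Set.univ := by
        ext u; simp [h]
      rw [he]; exact convex_univ
    · by_cases hbot : β i = ⊥
      · have he : {u : Fin n → ℝ | ((u i : ℝ) : EReal) ≤ β i} = ∅ := by
          ext u
          simp only [Set.mem_setOf_eq, Set.mem_empty_iff_false, iff_false, not_le, hbot]
          exact EReal.bot_lt_coe _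
        rw [he]; exact convex_empty
      · lift β i to ℝ using ⟨h.ne, hbot⟩ with b hb
        have : {u : Fin n → ℝ | ((u i : ℝ) : EReal) ≤ (b : EReal)} =
            {u : Fin n → ℝ | u i ≤ b} := by
          ext u; simp [EReal.coe_le_coe_iff]
        rw [this]
        exact convex_halfSpace_le ⟨fun x y => rfl, fun c x => rfl⟩ b

theorem convexHull_inter_box (n : ℕ) (S : Set (Fin n → ℤ))
    (hS : IntegrallyConvexSet S) (α β : Fin n → EReal)
    (hα : ∀ i, α i = ⊥ ∨ ∃ m : ℤ, α i = ((m : ℝ) : EReal))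
    (hβ : ∀ i, β i = ⊤ ∨ ∃ m : ℤ, β i = ((m : ℝ) : EReal))
    (hαβ : ∀ i, α i ≤ β i) :
    convexHull ℝ (castR ''
        (S ∩ {x : Fin n → ℤ | ∀ i, α i ≤ ((x i : ℝ) : EReal) ∧ ((x i : ℝ) : EReal) ≤ β i})) =
      convexHull ℝ (castR '' S) ∩
        convexHull ℝ (castR ''
          {x : Fin n → ℤ | ∀ i, α i ≤ ((x i : ℝ) : EReal) ∧ ((x i : ℝ) : EReal) ≤ β i}) := by
  set D : Set (Fin n → ℤ) :=
    {x : Fin n → ℤ | ∀ i, α i ≤ ((x i : ℝ) : EReal) ∧ ((x i : ℝ) : EReal) ≤ β i} with hD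
  apply le_antisymm
  · exact le_inf (convexHull_mono (Set.image_mono Set.inter_subset_left))
      (convexHull_mono (Set.image_mono Set.inter_subset_right))
  · rintro u ⟨huS, huD⟩
    -- u lies in the real box
    have hbox : ∀ i, α i ≤ ((u i : ℝ) : EReal) ∧ ((u i : ℝ) : EReal) ≤ β i := by
      have := convexHull_min (s := castR '' D)
        (t := {v : Fin n → ℝ | ∀ i, α i ≤ ((v i : ℝ) : EReal) ∧ ((v i : ℝ) : EReal) ≤ β i})
        (by rintro v ⟨x, hx, rfl⟩; exact hx) (real_box_convex α β) huD
      exact this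
    -- integral convexity
    have hN := hS.2 u huS
    refine convexHull_mono (Set.image_mono ?_) hN
    rintro z ⟨hzS, hzN⟩
    refine ⟨hzS, fun i => ⟨?_, ?_⟩⟩
    · rcases hα i with h | ⟨m, h⟩
      · simp [h]
      · rw [h]
        have hb := (hbox i).1
        rw [h] at hb
        have h1 : (m : ℝ) ≤ u i := by exact_mod_cast hb
        have h2 : u i - (z i : ℝ) < 1 := (abs_lt.mp (hzN i)).2
        have : (m : ℝ) - 1 < (z i : ℝ) := by linarith
        have hz : m - 1 < z i := by exact_mod_cast this
        have : (m : ℝ) ≤ (z i : ℝ) := by exact_mod_cast (by omega : m ≤ z i)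
        exact_mod_cast this
    · rcases hβ i with h | ⟨m, h⟩
      · simp [h]
      · rw [h]
        have hb := (hbox i).2
        rw [h] at hb
        have h1 : u i ≤ (m : ℝ) := by exact_mod_cast hb
        have h2 : -1 < u i - (z i : ℝ) := (abs_lt.mp (hzN i)).1
        have : (z i : ℝ) < (m : ℝ) + 1 := by linarith
        have hz : z i < m + 1 := by exact_mod_cast this
        have : (z i : ℝ) ≤ (m : ℝ) := by exact_mod_cast (by omega : z i ≤ m)
        exact_mod_cast this
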